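/- If φ is uniformly distributed on (−π, π] and φ̂ is its uniform b-bit quantization, then E[|e^{iφ} − e^{iφ̂}|²] = 2 − 2·sinc(2^{−b}). -/

import Mathlib

open Real MeasureTheory

/-- Uniform `b`-bit quantizer on `(-π, π]`: `φ` is mapped to the midpoint of the
quantization cell of width `2π/2^b` containing it. -/
noncomputable def uniformQuantizer (b : ℕ) (φ : ℝ) : ℝ :=
  -π + ((⌈(φ + π) / (2 * π / 2 ^ b)⌉ : ℝ) - 1 / 2) * (2 * π / 2 ^ b)

lemma quant_eq (b k : ℕ) (φ : ℝ)
    (hφ : φ ∈ Set.Ioc (-π + k * (2*π/2^b)) (-π + (k+1) * (2*π/2^b))) :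
    uniformQuantizer b φ = -π + ((k:ℝ) + 1/2) * (2*π/2^b) := by
  have hh : (0:ℝ) < 2*π/2^b := by positivity
  have hceil : ⌈(φ + π) / (2*π/2^b)⌉ = (k+1 : ℤ) := by
    rw [Int.ceil_eq_iff]
    constructor
    · push_cast
      rw [lt_div_iff₀ hh]
      have := hφ.1
      ring_nf; ring_nf at this; linarith
    · push_cast
      rw [div_le_iff₀ hh]
      have := hφ.2
      ring_nf; ring_nf at this; linarith
  unfold uniformQuantizer
  rw [hceil]; push_cast; ring

lemma norm_exp_sub (x y : ℝ) :
    ‖Complex.exp (Complex.I * x) - Complex.exp (Complex.I * y)‖^2 = 2 - 2 * Real.cos (x - y) := by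
  rw [mul_comm Complex.I, mul_comm Complex.I, Complex.exp_mul_I, Complex.exp_mul_I,
    Complex.sq_norm, Complex.normSq_apply]
  simp [Real.cos_sub, Complex.cos_ofReal_re, Complex.sin_ofReal_re]
  nlinarith [Real.sin_sq_add_cos_sq x, Real.sin_sq_add_cos_sq y]

lemma cell_integral (c h : ℝ) :
    ∫ x in (c - h/2)..(c + h/2), (2 - 2 * Real.cos (x - c)) = 2*h - 4*Real.sin (h/2) := by
  rw [intervalIntegral.integral_comp_sub_right (a := c - h/2) (b := c + h/2)
    (fun x => 2 - 2 * Real.cos x) c,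
    intervalIntegral.integral_sub (g := fun x => 2 * Real.cos x) intervalIntegrable_const
      ((continuous_const.mul Real.continuous_cos).intervalIntegrable _ _),
    intervalIntegral.integral_const, intervalIntegral.integral_const_mul, integral_cos]
  simp; ring

theorem expected_sq_error_of_phase_quantization (b : ℕ) :
    (1 / (2 * π)) * ∫ φ in Set.Ioc (-π) π,
        ‖Complex.exp (Complex.I * (φ : ℝ)) -
          Complex.exp (Complex.I * (uniformQuantizer b φ : ℝ))‖ ^ 2 =
      2 - 2 * (Real.sin (π * ((2 : ℝ) ^ b)⁻¹) / (π * ((2 : ℝ) ^ b)⁻¹)) := by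
  set h : ℝ := 2*π/2^b with hdef
  have hh : (0:ℝ) < h := by positivity
  set F : ℝ → ℝ := fun φ =>
    ‖Complex.exp (Complex.I * (φ : ℝ)) -
      Complex.exp (Complex.I * (uniformQuantizer b φ : ℝ))‖ ^ 2 with hF
  set a : ℕ → ℝ := fun k => -π + k * h with ha
  -- endpoints
  have h2b : ((2:ℝ)^b) ≠ 0 := by positivity
  have ha0 : a 0 = -π := by simp [ha]
  have han : a (2^b) = π := by
    simp only [ha, hdef]
    push_cast
    field_simp
    ring
  -- pointwise description on each cell
  have key : ∀ k : ℕ, Set.EqOn F (fun x => 2 - 2 * Real.cos (x - (-π + ((k:ℝ) + 1/2) * h)))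
      (Set.Ioc (a k) (a (k+1))) := by
    intro k x hx
    have hq : uniformQuantizer b x = -π + ((k:ℝ) + 1/2) * h := by
      apply quant_eq b k x
      simpa [ha, hdef] using hx
    simp only [hF, hq]
    rw [norm_exp_sub]
  have hle : ∀ k : ℕ, a k ≤ a (k+1) := by
    intro k
    simp only [ha]
    push_cast
    nlinarith
  -- integrability on each cell
  have hint : ∀ k : ℕ, IntervalIntegrable F volume (a k) (a (k+1)) := by
    intro k
    rw [intervalIntegrable_iff_integrableOn_Ioc_of_le (hle k)]
    exact (((continuous_const.sub (continuous_const.mul (Real.continuous_cos.comp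
      (continuous_id.sub continuous_const)))).integrableOn_Ioc)).congr_fun
      (fun x hx => ((key k) hx).symm) measurableSet_Ioc
  -- each cell integral value
  have hcell : ∀ k : ℕ, (∫ x in a k..a (k+1), F x) = 2*h - 4*Real.sin (h/2) := by
    intro k
    rw [intervalIntegral.integral_of_le (hle k),
      setIntegral_congr_fun measurableSet_Ioc (key k),
      ← intervalIntegral.integral_of_le (hle k)]
    have e1 : a k = (-π + ((k:ℝ) + 1/2) * h) - h/2 := by simp only [ha]; ring
    have e2 : a (k+1) = (-π + ((k:ℝ) + 1/2) * h) + h/2 := by simp only [ha]; push_cast; ring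
    rw [e1, e2, cell_integral]
  -- assemble
  have hsum := intervalIntegral.sum_integral_adjacent_intervals (μ := volume) (a := a)
    (n := 2^b) (fun k _ => hint k)
  have hmain : (∫ φ in Set.Ioc (-π) π, F φ) = (2^b : ℝ) * (2*h - 4*Real.sin (h/2)) := by
    rw [← intervalIntegral.integral_of_le (by linarith [pi_pos] : -π ≤ π)]
    rw [show (-π : ℝ) = a 0 from ha0.symm, show (π : ℝ) = a (2^b) from han.symm]
    rw [← hsum]
    rw [Finset.sum_congr rfl (fun k _ => hcell k), Finset.sum_const]
    simp
  show 1 / (2 * π) * (∫ φ in Set.Ioc (-π) π, F φ) =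
      2 - 2 * (Real.sin (π * ((2 : ℝ) ^ b)⁻¹) / (π * ((2 : ℝ) ^ b)⁻¹))
  rw [hmain]
  have hhalf : h/2 = π * ((2:ℝ)^b)⁻¹ := by rw [hdef]; field_simp
  rw [hhalf, hdef]
  have hπ : (π:ℝ) ≠ 0 := Real.pi_ne_zero
  field_simp
  ring
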